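/- Let u_T : ℝⁿ → ℝ be Lipschitz with I_T(u_T) nonempty, and let u0 ∈ I_T(u_T). Then for any x0 ∈ ℝⁿ, the following are equivalent: (1) x0 ∈ X_T(u_T); (2) there exist p0 ∈ D⁻u0(x0) and c0 ∈ ℝ such that u0(x0) = −T·L(∇H(p0)) + c0 and u0(x) > −T·L(∇H(p0) + (x0 − x)/T) + c0 for all x ∈ ℝⁿ with x ≠ x0. -/

import Mathlib

open scoped RealInnerProductSpace
open Filter

noncomputable section

/-- `n`-dimensional Euclidean space. -/
abbrev Euc (n : ℕ) := EuclideanSpace ℝ (Fin n)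

/-- A real-valued function on `ℝⁿ` is Lipschitz (with some constant). -/
def IsLip {n : ℕ} (f : Euc n → ℝ) : Prop := ∃ K : NNReal, LipschitzWith K f

/-- The Legendre transform `L(q) = sup_p (⟨q,p⟫ - H(p))`. -/
def legendre {n : ℕ} (H : Euc n → ℝ) (q : Euc n) : ℝ :=
  ⨆ p : Euc n, (⟪q, p⟫ - H p)

/-- The forward Hopf–Lax operator `(S_T^+ g)(x) = inf_y [g(y) + T·L((x-y)/T)]`. -/
def Splus {n : ℕ} (T : ℝ) (L : Euc n → ℝ) (g : Euc n → ℝ) (x : Euc n) : ℝ :=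
  ⨅ y : Euc n, (g y + T * L (T⁻¹ • (x - y)))

/-- The backward operator `(S_T^- g)(x) = sup_y [g(y) - T·L((y-x)/T)]`. -/
def Sminus {n : ℕ} (T : ℝ) (L : Euc n → ℝ) (g : Euc n → ℝ) (x : Euc n) : ℝ :=
  ⨆ y : Euc n, (g y - T * L (T⁻¹ • (y - x)))

/-- The Hessian of `H` is positive definite at every point. -/
def PosDefHessian {n : ℕ} (H : Euc n → ℝ) : Prop :=
  ∀ p v : Euc n, v ≠ 0 → 0 < iteratedFDeriv ℝ 2 H p ![v, v]

/-- `H` is superlinear: `H(p)/‖p‖ → +∞` as `‖p‖ → +∞`. -/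
def Superlinear {n : ℕ} (H : Euc n → ℝ) : Prop :=
  Tendsto (fun p : Euc n => H p / ‖p‖) (cocompact (Euc n)) atTop

/-- The set `X_T(u_T) = { z - T·∇H(∇u_T(z)) : u_T differentiable at z }`. -/
def XT {n : ℕ} (T : ℝ) (H : Euc n → ℝ) (uT : Euc n → ℝ) : Set (Euc n) :=
  {x | ∃ z : Euc n, DifferentiableAt ℝ uT z ∧ x = z - T • gradient H (gradient uT z)}

/-- The subdifferential `D⁻u0(x0)`: the set of `p` such that some `C¹` function `φ` with
`∇φ(x0) = p` touches `u0` from below at `x0`. -/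
def subdiff {n : ℕ} (u0 : Euc n → ℝ) (x0 : Euc n) : Set (Euc n) :=
  {p | ∃ φ : Euc n → ℝ, ContDiff ℝ 1 φ ∧ gradient φ x0 = p ∧
    (∀ x : Euc n, φ x ≤ u0 x) ∧ u0 x0 = φ x0}


open Set Metric

section Aux

variable {n : ℕ} {H : Euc n → ℝ} {m : Euc n → Euc n}

lemma key_strict_support (hH : ContDiff ℝ 2 H) (hHconv : PosDefHessian H) (p p' : Euc n)
    (hne : p' ≠ p) : ⟪gradient H p, p' - p⟫ < H p' - H p := by
  set v := p' - p with hv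
  have hvne : v ≠ 0 := sub_ne_zero.2 hne
  set g : ℝ → ℝ := fun t => H (p + t • v) with hg
  set G : ℝ → ℝ := fun t => fderiv ℝ H (p + t • v) v with hGdef
  have hline : ∀ t : ℝ, HasDerivAt (fun s : ℝ => p + s • v) v t := by
    intro t
    simpa using ((hasDerivAt_id t).smul_const v).const_add p
  have hdiffH : Differentiable ℝ H := hH.differentiable (by norm_num)
  have hgd : ∀ t, HasDerivAt g (G t) t := by
    intro t
    exact (hdiffH (p + t • v)).hasFDerivAt.comp_hasDerivAt t (hline t)
  have hF : ContDiff ℝ 1 (fderiv ℝ H) := hH.fderiv_right (by norm_num)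
  have hGd : ∀ t, HasDerivAt G (fderiv ℝ (fderiv ℝ H) (p + t • v) v v) t := by
    intro t
    have h1 : HasFDerivAt (fderiv ℝ H) (fderiv ℝ (fderiv ℝ H) (p + t • v)) (p + t • v) :=
      (hF.differentiable (by norm_num) (p + t • v)).hasFDerivAt
    have h2 := (ContinuousLinearMap.apply ℝ ℝ v).hasFDerivAt.comp (p + t • v) h1
    exact h2.comp_hasDerivAt t (hline t)
  have hpos : ∀ t : ℝ, 0 < fderiv ℝ (fderiv ℝ H) (p + t • v) v v := by
    intro t
    have := hHconv (p + t • v) v hvne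
    rwa [iteratedFDeriv_two_apply] at this
  have hGmono : StrictMono G := by
    apply strictMono_of_deriv_pos
    intro t
    rw [(hGd t).deriv]
    exact hpos t
  obtain ⟨c, hc, hcslope⟩ := exists_hasDerivAt_eq_slope g G zero_lt_one
    ((hH.continuous.comp (by continuity)).continuousOn) (fun x _ => hgd x)
  have h10 : g 1 - g 0 = G c := by
    rw [hcslope]; ring
  have hG0 : G 0 = ⟪gradient H p, v⟫ := by
    have hgr := (hdiffH p).hasGradientAt
    rw [hGdef]
    simp only [zero_smul, add_zero]
    rw [hgr.hasFDerivAt.fderiv]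
    simp [InnerProductSpace.toDual_apply_apply]
  have : G 0 < G c := hGmono hc.1
  have hg1 : g 1 = H p' := by simp [hg, hv]
  have hg0 : g 0 = H p := by simp [hg]
  rw [← hG0] at *
  linarith [h10, hg1, hg0, this]

lemma superlin_bound (hHc : Continuous H) (hs : Superlinear H) (M : ℝ) :
    ∃ C : ℝ, 0 ≤ C ∧ ∀ p, M * ‖p‖ - C ≤ H p := by
  set M' := max M 0 with hM'
  have h := hs.eventually (Filter.eventually_ge_atTop M')
  rw [Filter.hasBasis_cocompact.eventually_iff] at h
  obtain ⟨K, hK, hKs⟩ := h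
  obtain ⟨r, hr⟩ :=
    ((hK.union (isCompact_singleton (x := (0:Euc n)))).isBounded.subset_closedBall (0 : Euc n))
  have hr0 : 0 ≤ r := by
    have := hr (Or.inr (mem_singleton _)); simpa [mem_closedBall, dist_eq_norm] using this
  obtain ⟨pm, _, hpm⟩ := (isCompact_closedBall (0 : Euc n) r).exists_isMinOn
    ⟨0, mem_closedBall_self hr0⟩ hHc.continuousOn
  refine ⟨M' * r + |H pm|, by positivity, fun p => ?_⟩
  have hMM' : M * ‖p‖ ≤ M' * ‖p‖ := by
    apply mul_le_mul_of_nonneg_right (le_max_left _ _) (norm_nonneg _)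
  by_cases hp : p ∈ closedBall (0 : Euc n) r
  · have h1 : H pm ≤ H p := hpm hp
    have h2 : ‖p‖ ≤ r := by simpa [mem_closedBall, dist_eq_norm] using hp
    have h3 : M' * ‖p‖ ≤ M' * r := by
      apply mul_le_mul_of_nonneg_left h2 (le_max_right _ _)
    have h4 : -|H pm| ≤ H pm := neg_abs_le _
    linarith
  · have hpK : p ∉ K := fun hpmem => hp (hr (Or.inl hpmem))
    have hp0 : p ≠ 0 := by
      intro h0; exact hp (by simp [h0, mem_closedBall, hr0])
    have hnp : 0 < ‖p‖ := norm_pos_iff.2 hp0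
    have := hKs hpK
    have h5 : M' * ‖p‖ ≤ H p := by
      rw [le_div_iff₀ hnp] at this
      linarith [this]
    have h6 : (0:ℝ) ≤ M' * r + |H pm| := by positivity
    linarith

lemma exists_min_coercive {f : Euc n → ℝ} (hf : Continuous f) {a : ℝ} {z : Euc n}
    (h : ∀ x, a + ‖x - z‖ ≤ f x) : ∃ w, ∀ x, f w ≤ f x := by
  have hfz : a ≤ f z := by simpa using h z
  obtain ⟨w, hw, hmin⟩ := (isCompact_closedBall z (f z - a)).exists_isMinOn
    ⟨z, mem_closedBall_self (by linarith)⟩ hf.continuousOn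
  refine ⟨w, fun x => ?_⟩
  by_cases hx : x ∈ closedBall z (f z - a)
  · exact hmin hx
  · have h1 : f z - a < ‖x - z‖ := by
      simpa [mem_closedBall, dist_eq_norm] using hx
    have h2 : f w ≤ f z := hmin (mem_closedBall_self (by linarith))
    have := h x
    linarith

/-- Existence of a maximizer in the Legendre transform. -/
lemma exists_legendre_max (hH : Continuous H) (hs : Superlinear H) (q : Euc n) :
    ∃ pm, ∀ p, ⟪q, p⟫ - H p ≤ ⟪q, pm⟫ - H pm := by
  obtain ⟨C, hC0, hC⟩ := superlin_bound hH hs (‖q‖ + 1)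
  have hco : ∀ p : Euc n, (-C) + ‖p - 0‖ ≤ -(⟪q, p⟫ - H p) := by
    intro p
    have h1 := hC p
    have h2 : ⟪q, p⟫ ≤ ‖q‖ * ‖p‖ := real_inner_le_norm q p
    have : (‖q‖ + 1) * ‖p‖ = ‖q‖ * ‖p‖ + ‖p‖ := by ring
    simp only [sub_zero]
    linarith
  have hcont : Continuous fun p : Euc n => -(⟪q, p⟫ - H p) :=
    ((continuous_const.inner continuous_id).sub hH).neg
  obtain ⟨w, hw⟩ := exists_min_coercive hcont hco
  exact ⟨w, fun p => by linarith [hw p]⟩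

/-- `m` is a maximizer selection for the Legendre transform of `H`. -/
def IsLegMax (H : Euc n → ℝ) (m : Euc n → Euc n) : Prop :=
  ∀ q p, ⟪q, p⟫ - H p ≤ ⟪q, m q⟫ - H (m q)

lemma legendre_eq_m (hm : IsLegMax H m) (q : Euc n) :
    legendre H q = ⟪q, m q⟫ - H (m q) := by
  apply le_antisymm
  · exact ciSup_le (hm q)
  · exact le_ciSup ⟨_, Set.forall_mem_range.2 (hm q)⟩ (m q)

lemma fenchel (hm : IsLegMax H m) (q p : Euc n) : ⟪q, p⟫ - H p ≤ legendre H q := by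
  rw [legendre_eq_m hm]; exact hm q p

lemma gradH_m (hH : ContDiff ℝ 2 H) (hm : IsLegMax H m) (q : Euc n) :
    gradient H (m q) = q := by
  have hdiffH : Differentiable ℝ H := hH.differentiable (by norm_num)
  have hmax : IsLocalMax (fun p => ⟪q, p⟫ - H p) (m q) := by
    apply Filter.Eventually.of_forall
    intro p; exact hm q p
  have hfd : HasFDerivAt (fun p : Euc n => ⟪q, p⟫ - H p)
      (InnerProductSpace.toDual ℝ (Euc n) q - fderiv ℝ H (m q)) (m q) := by
    exact ((InnerProductSpace.toDual ℝ (Euc n) q).hasFDerivAt).sub (hdiffH (m q)).hasFDerivAt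
  have h0 := hmax.hasFDerivAt_eq_zero hfd
  have heq : InnerProductSpace.toDual ℝ (Euc n) q = fderiv ℝ H (m q) := sub_eq_zero.1 h0
  have : HasFDerivAt H (InnerProductSpace.toDual ℝ (Euc n) q) (m q) := by
    rw [heq]; exact (hdiffH (m q)).hasFDerivAt
  exact ((hasGradientAt_iff_hasFDerivAt).2 this).gradient

/-- Strictness: for `p' ≠ m q` the value is strictly below the max. -/
lemma strict_max (hH : ContDiff ℝ 2 H) (hHconv : PosDefHessian H) (hm : IsLegMax H m)
    (q p : Euc n) (hne : p ≠ m q) : ⟪q, p⟫ - H p < ⟪q, m q⟫ - H (m q) := by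
  have := key_strict_support hH hHconv (m q) p hne
  rw [gradH_m hH hm] at this
  rw [inner_sub_right] at this
  linarith

lemma m_gradH (hH : ContDiff ℝ 2 H) (hHconv : PosDefHessian H) (hm : IsLegMax H m)
    (p : Euc n) : m (gradient H p) = p := by
  by_contra hne
  have h1 := key_strict_support hH hHconv p (m (gradient H p)) hne
  rw [inner_sub_right] at h1
  have h2 := hm (gradient H p) p
  linarith


lemma m_bound (hHc : Continuous H) (hs : Superlinear H) (hm : IsLegMax H m) (R : ℝ) :
    ∃ B : ℝ, 0 ≤ B ∧ ∀ q, ‖q‖ ≤ R → ‖m q‖ ≤ B := by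
  obtain ⟨C, hC0, hC⟩ := superlin_bound hHc hs (R + 1)
  refine ⟨C + |H 0|, by positivity, fun q hq => ?_⟩
  have h1 := hm q 0
  have h2 := hC (m q)
  have h3 : ⟪q, m q⟫ ≤ ‖q‖ * ‖m q‖ := real_inner_le_norm _ _
  have h4 : ‖q‖ * ‖m q‖ ≤ R * ‖m q‖ := mul_le_mul_of_nonneg_right hq (norm_nonneg _)
  have h5 : -|H 0| ≤ -H 0 := neg_le_neg (le_abs_self _)
  have h6 : (R + 1) * ‖m q‖ = R * ‖m q‖ + ‖m q‖ := by ring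
  simp only [inner_zero_right] at h1
  linarith

lemma m_cont (hH : ContDiff ℝ 2 H) (hHconv : PosDefHessian H) (hs : Superlinear H)
    (hm : IsLegMax H m) : Continuous m := by
  rw [continuous_iff_continuousAt]
  intro q
  rw [Metric.continuousAt_iff]
  intro ε hε
  obtain ⟨B, hB0, hB⟩ := m_bound hH.continuous hs hm (‖q‖ + 1)
  have hmqB : ‖m q‖ ≤ B := hB q (by linarith [norm_nonneg q])
  set S : Set (Euc n) := closedBall 0 B ∩ {p | ε ≤ ‖p - m q‖} with hS
  have hScomp : IsCompact S := (isCompact_closedBall _ _).inter_right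
    (isClosed_le continuous_const ((continuous_id.sub continuous_const).norm))
  have hfc : Continuous fun p : Euc n => ⟪q, p⟫ - H p :=
    (continuous_const.inner continuous_id).sub hH.continuous
  rcases S.eq_empty_or_nonempty with hSe | hSne
  · refine ⟨1, one_pos, fun {q'} hq' => ?_⟩
    have hq'B : ‖m q'‖ ≤ B := by
      apply hB
      have := dist_eq_norm q' q ▸ hq'
      calc ‖q'‖ ≤ ‖q' - q‖ + ‖q‖ := by
            simpa using norm_add_le (q' - q) q
        _ ≤ ‖q‖ + 1 := by linarith
    have : m q' ∉ S := by rw [hSe]; exact notMem_empty _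
    rw [hS] at this
    simp only [mem_inter_iff, mem_closedBall, mem_setOf_eq, not_and] at this
    have h2 := this (by simpa [dist_eq_norm] using hq'B)
    rw [dist_eq_norm]
    linarith [not_le.1 h2]
  · obtain ⟨pb, hpbS, hpbmax⟩ := hScomp.exists_isMaxOn hSne hfc.continuousOn
    have hpbne : pb ≠ m q := by
      intro h
      have := hpbS.2
      rw [h] at this
      simp only [mem_setOf_eq, sub_self, norm_zero] at this
      linarith
    have hgap : ⟪q, pb⟫ - H pb < ⟪q, m q⟫ - H (m q) := strict_max hH hHconv hm q pb hpbne
    set gap := (⟪q, m q⟫ - H (m q)) - (⟪q, pb⟫ - H pb) with hgapdef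
    have hgap0 : 0 < gap := by rw [hgapdef]; linarith
    refine ⟨min 1 (gap / (2 * B + 2)), lt_min one_pos (by positivity), fun {q'} hq' => ?_⟩
    have hd1 : dist q' q < 1 := lt_of_lt_of_le hq' (min_le_left _ _)
    have hd2 : dist q' q < gap / (2 * B + 2) := lt_of_lt_of_le hq' (min_le_right _ _)
    have hq'B : ‖m q'‖ ≤ B := by
      apply hB
      rw [dist_eq_norm] at hd1
      calc ‖q'‖ ≤ ‖q' - q‖ + ‖q‖ := by simpa using norm_add_le (q' - q) q
        _ ≤ ‖q‖ + 1 := by linarith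
    by_contra hcon
    push_neg at hcon
    have hmqS : m q' ∈ S := by
      constructor
      · simpa [mem_closedBall, dist_eq_norm] using hq'B
      · simp only [mem_setOf_eq]
        rw [dist_eq_norm] at hcon
        exact hcon
    have hmax := hpbmax hmqS
    simp only [mem_setOf_eq] at hmax
    -- hmax : ⟪q, m q'⟫ - H (m q') ≤ ⟪q, pb⟫ - H pb
    have key1 : ⟪q', m q⟫ - H (m q) ≤ ⟪q', m q'⟫ - H (m q') := hm q' (m q)
    have e1 : ⟪q', m q⟫ = ⟪q, m q⟫ + ⟪q' - q, m q⟫ := by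
      rw [← inner_add_left]
      congr 1
      abel
    have e2 : ⟪q', m q'⟫ = ⟪q, m q'⟫ + ⟪q' - q, m q'⟫ := by
      rw [← inner_add_left]
      congr 1
      abel
    have b1 : |⟪q' - q, m q⟫| ≤ dist q' q * B := by
      calc |⟪q' - q, m q⟫| ≤ ‖q' - q‖ * ‖m q‖ := abs_real_inner_le_norm _ _
        _ ≤ dist q' q * B := by
            rw [dist_eq_norm]
            exact mul_le_mul_of_nonneg_left hmqB (norm_nonneg _)
    have b2 : |⟪q' - q, m q'⟫| ≤ dist q' q * B := by
      calc |⟪q' - q, m q'⟫| ≤ ‖q' - q‖ * ‖m q'‖ := abs_real_inner_le_norm _ _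
        _ ≤ dist q' q * B := by
            rw [dist_eq_norm]
            exact mul_le_mul_of_nonneg_left hq'B (norm_nonneg _)
    have hdB : dist q' q * B ≤ gap / (2 * B + 2) * B := by
      apply mul_le_mul_of_nonneg_right (le_of_lt hd2) hB0
    have hfrac : gap / (2 * B + 2) * B < gap / 2 := by
      rw [div_mul_eq_mul_div, div_lt_div_iff₀ (by positivity) (by norm_num)]
      nlinarith
    have habs1 := abs_le.1 b1
    have habs2 := abs_le.1 b2
    rw [hgapdef] at *
    nlinarith

lemma legendre_hasGradientAt (hH : ContDiff ℝ 2 H) (hHconv : PosDefHessian H)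
    (hs : Superlinear H) (hm : IsLegMax H m) (q : Euc n) :
    HasGradientAt (legendre H) (m q) q := by
  have hcont : Continuous m := m_cont hH hHconv hs hm
  rw [hasGradientAt_iff_hasFDerivAt, hasFDerivAt_iff_isLittleO_nhds_zero,
    Asymptotics.isLittleO_iff]
  intro c hc
  have htend : Filter.Tendsto (fun h : Euc n => m (q + h)) (nhds 0) (nhds (m q)) := by
    have h1 : Filter.Tendsto (fun h : Euc n => q + h) (nhds 0) (nhds q) := by
      simpa using (continuous_add_left q).tendsto (0 : Euc n)
    exact (hcont.tendsto q).comp h1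
  have hev : ∀ᶠ h : Euc n in nhds 0, dist (m (q + h)) (m q) ≤ c := by
    filter_upwards [Metric.tendsto_nhds.mp htend c hc] with h hh using le_of_lt hh
  filter_upwards [hev] with h hh
  have low : 0 ≤ legendre H (q + h) - legendre H q - ⟪h, m q⟫ := by
    have f1 := fenchel hm (q + h) (m q)
    have f2 := legendre_eq_m hm q
    rw [inner_add_left] at f1
    linarith
  have upp : legendre H (q + h) - legendre H q - ⟪h, m q⟫ ≤ ⟪h, m (q + h) - m q⟫ := by
    have f1 := fenchel hm q (m (q + h))
    have f2 := legendre_eq_m hm (q + h)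
    rw [inner_add_left] at f2
    rw [inner_sub_right]
    linarith
  have hb : ⟪h, m (q + h) - m q⟫ ≤ ‖h‖ * c := by
    calc ⟪h, m (q + h) - m q⟫ ≤ ‖h‖ * ‖m (q + h) - m q‖ := real_inner_le_norm _ _
      _ ≤ ‖h‖ * c := by
          apply mul_le_mul_of_nonneg_left _ (norm_nonneg _)
          rw [← dist_eq_norm]
          exact hh
  have hdual : (InnerProductSpace.toDual ℝ (Euc n)) (m q) h = ⟪h, m q⟫ := by
    rw [InnerProductSpace.toDual_apply_apply]
    exact real_inner_comm _ _
  rw [Real.norm_eq_abs, abs_le]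
  constructor
  · simp only [hdual]
    have : (0:ℝ) ≤ c * ‖h‖ := by positivity
    linarith
  · simp only [hdual]
    calc legendre H (q + h) - legendre H q - ⟪h, m q⟫ ≤ ‖h‖ * c := le_trans upp hb
      _ = c * ‖h‖ := mul_comm _ _

lemma legendre_lower (hHc : Continuous H) (hm : IsLegMax H m) {M : ℝ} (hM : 0 ≤ M) :
    ∃ C : ℝ, ∀ q, M * ‖q‖ - C ≤ legendre H q := by
  obtain ⟨pc, _, hpc⟩ := (isCompact_closedBall (0 : Euc n) M).exists_isMaxOn
    ⟨0, mem_closedBall_self hM⟩ hHc.continuousOn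
  refine ⟨H pc, fun q => ?_⟩
  by_cases hq : q = 0
  · subst hq
    have f1 := fenchel hm (0 : Euc n) 0
    have h0 : H 0 ≤ H pc := hpc (mem_closedBall_self hM)
    simp only [inner_zero_left, zero_sub] at f1
    simp only [norm_zero, mul_zero, zero_sub]
    linarith
  · have hnq : 0 < ‖q‖ := norm_pos_iff.2 hq
    set p := (M / ‖q‖) • q with hp
    have hnormp : ‖p‖ = M := by
      rw [hp, norm_smul, Real.norm_eq_abs, abs_of_nonneg (by positivity)]
      field_simp
    have hinner : ⟪q, p⟫ = M * ‖q‖ := by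
      rw [hp, real_inner_smul_right, real_inner_self_eq_norm_sq]
      field_simp
    have hHp : H p ≤ H pc := by
      apply hpc
      simp [mem_closedBall, dist_eq_norm, hnormp, le_refl]
    have := fenchel hm q p
    rw [hinner] at this
    linarith

lemma legendre_sub_le (hm : IsLegMax H m) (a b : Euc n) :
    legendre H a - legendre H b ≤ ‖a - b‖ * ‖m a‖ := by
  have h1 := fenchel hm b (m a)
  have h2 := legendre_eq_m hm a
  have h3 : ⟪a, m a⟫ - ⟪b, m a⟫ = ⟪a - b, m a⟫ := by rw [inner_sub_left]
  have h4 : ⟪a - b, m a⟫ ≤ ‖a - b‖ * ‖m a‖ := real_inner_le_norm _ _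
  linarith

lemma legendre_contDiff (hH : ContDiff ℝ 2 H) (hHconv : PosDefHessian H)
    (hs : Superlinear H) (hm : IsLegMax H m) : ContDiff ℝ 1 (legendre H) := by
  rw [contDiff_one_iff_fderiv]
  have hdiff : Differentiable ℝ (legendre H) :=
    fun q => (legendre_hasGradientAt hH hHconv hs hm q).differentiableAt
  refine ⟨hdiff, ?_⟩
  have hfd : (fderiv ℝ (legendre H)) =
      fun q => (InnerProductSpace.toDual ℝ (Euc n)) (m q) := by
    funext q
    exact ((legendre_hasGradientAt hH hHconv hs hm q).hasFDerivAt).fderiv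
  rw [hfd]
  exact (InnerProductSpace.toDual ℝ (Euc n)).continuous.comp (m_cont hH hHconv hs hm)

lemma hasGradientAt_shift (hH : ContDiff ℝ 2 H) (hHconv : PosDefHessian H)
    (hs : Superlinear H) (hm : IsLegMax H m) {T : ℝ} (hT : 0 < T) (w z : Euc n) :
    HasGradientAt (fun z' : Euc n => T * legendre H (T⁻¹ • (z' - w)))
      (m (T⁻¹ • (z - w))) z := by
  have hTne : T ≠ 0 := ne_of_gt hT
  set a := T⁻¹ • (z - w) with ha
  have hL := (legendre_hasGradientAt hH hHconv hs hm a).hasFDerivAt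
  have hinner : HasFDerivAt (fun z' : Euc n => T⁻¹ • (z' - w))
      (T⁻¹ • ContinuousLinearMap.id ℝ (Euc n)) z := by
    exact (((ContinuousLinearMap.id ℝ (Euc n)).hasFDerivAt (x := z)).sub_const w).const_smul T⁻¹
  have hcomp := hL.comp z hinner
  have hmul := hcomp.const_mul T
  rw [hasGradientAt_iff_hasFDerivAt]
  convert hmul using 1
  · rfl
  · rfl
  ext v
  simp only [ContinuousLinearMap.smul_apply, ContinuousLinearMap.coe_comp', Function.comp_apply,
    ContinuousLinearMap.coe_smul', Pi.smul_apply, ContinuousLinearMap.coe_id', id_eq,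
    InnerProductSpace.toDual_apply_apply, inner_smul_right, smul_eq_mul]
  field_simp

lemma hasGradientAt_shift' (hH : ContDiff ℝ 2 H) (hHconv : PosDefHessian H)
    (hs : Superlinear H) (hm : IsLegMax H m) {T : ℝ} (hT : 0 < T) (z x : Euc n) :
    HasGradientAt (fun x' : Euc n => -(T * legendre H (T⁻¹ • (z - x'))))
      (m (T⁻¹ • (z - x))) x := by
  have hTne : T ≠ 0 := ne_of_gt hT
  set a := T⁻¹ • (z - x) with ha
  have hL := (legendre_hasGradientAt hH hHconv hs hm a).hasFDerivAt
  have hinner : HasFDerivAt (fun x' : Euc n => T⁻¹ • (z - x'))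
      (-(T⁻¹) • ContinuousLinearMap.id ℝ (Euc n)) x := by
    have h0 : HasFDerivAt (fun x' : Euc n => z - x')
        (-ContinuousLinearMap.id ℝ (Euc n)) x :=
      (hasFDerivAt_id x).const_sub z
    have := h0.const_smul T⁻¹
    have key : -(T⁻¹) • ContinuousLinearMap.id ℝ (Euc n) =
        T⁻¹ • -ContinuousLinearMap.id ℝ (Euc n) := by
      ext v
      simp [smul_smul]
    rw [key]
    exact this
  have hcomp := hL.comp x hinner
  have hmul := (hcomp.const_mul T).neg
  rw [hasGradientAt_iff_hasFDerivAt]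
  have key : (InnerProductSpace.toDual ℝ (Euc n)) (m a) =
      -(T • ((InnerProductSpace.toDual ℝ (Euc n)) (m a)).comp
        (-(T⁻¹) • ContinuousLinearMap.id ℝ (Euc n))) := by
   ext v
   simp only [ContinuousLinearMap.neg_apply, ContinuousLinearMap.smul_apply,
    ContinuousLinearMap.coe_comp', Function.comp_apply, ContinuousLinearMap.coe_smul',
    Pi.smul_apply, ContinuousLinearMap.coe_id', id_eq, InnerProductSpace.toDual_apply_apply,
    inner_smul_right, smul_eq_mul, neg_smul, ContinuousLinearMap.coe_neg', Pi.neg_apply]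
   field_simp
   rw [inner_neg_right, real_inner_smul_right]
   field_simp
  rw [key]
  exact hmul

lemma psi_coercive (hHc : Continuous H) (hm : IsLegMax H m) {T : ℝ} (hT : 0 < T)
    {K : NNReal} {u0 : Euc n → ℝ} (hK : LipschitzWith K u0) :
    ∃ C : ℝ, ∀ z x : Euc n,
      u0 z + ‖z - x‖ - C ≤ u0 x + T * legendre H (T⁻¹ • (z - x)) := by
  obtain ⟨CL, hCL⟩ := legendre_lower hHc hm (M := (K : ℝ) + 1) (by positivity)
  refine ⟨T * CL, fun z x => ?_⟩
  have h1 : |u0 x - u0 z| ≤ (K : ℝ) * ‖x - z‖ := by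
    have := hK.dist_le_mul x z
    rwa [Real.dist_eq, dist_eq_norm] at this
  have h2 := hCL (T⁻¹ • (z - x))
  have h3 : ‖T⁻¹ • (z - x)‖ = ‖z - x‖ / T := by
    rw [norm_smul, Real.norm_eq_abs, abs_of_pos (inv_pos.2 hT)]
    ring
  rw [h3] at h2
  have h4 : T * (((K : ℝ) + 1) * (‖z - x‖ / T) - CL) ≤ T * legendre H (T⁻¹ • (z - x)) :=
    mul_le_mul_of_nonneg_left h2 (le_of_lt hT)
  have h5 : T * (((K : ℝ) + 1) * (‖z - x‖ / T) - CL) = ((K : ℝ) + 1) * ‖z - x‖ - T * CL := by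
    field_simp
  have h6 : ‖x - z‖ = ‖z - x‖ := norm_sub_rev x z
  have h7 := abs_le.1 h1
  have h8 : (0 : ℝ) ≤ (K : ℝ) := K.coe_nonneg
  rw [h6] at h7
  rw [h5] at h4
  linarith [h7.1, h7.2]

lemma bddBelow_psi (hHc : Continuous H) (hm : IsLegMax H m) {T : ℝ} (hT : 0 < T)
    {K : NNReal} {u0 : Euc n → ℝ} (hK : LipschitzWith K u0) (z : Euc n) :
    BddBelow (Set.range fun x : Euc n => u0 x + T * legendre H (T⁻¹ • (z - x))) := by
  obtain ⟨C, hC⟩ := psi_coercive hHc hm hT hK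
  refine ⟨u0 z - C, Set.forall_mem_range.2 fun x => ?_⟩
  have := hC z x
  have h0 : (0 : ℝ) ≤ ‖z - x‖ := norm_nonneg _
  linarith

lemma Splus_le_psi (hHc : Continuous H) (hm : IsLegMax H m) {T : ℝ} (hT : 0 < T)
    {K : NNReal} {u0 : Euc n → ℝ} (hK : LipschitzWith K u0) (z x : Euc n) :
    Splus T (legendre H) u0 z ≤ u0 x + T * legendre H (T⁻¹ • (z - x)) :=
  ciInf_le (bddBelow_psi hHc hm hT hK z) x

lemma Splus_eq_min (hHc : Continuous H) (hm : IsLegMax H m) {T : ℝ} (hT : 0 < T)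
    {K : NNReal} {u0 : Euc n → ℝ} (hK : LipschitzWith K u0) {z w : Euc n}
    (hw : ∀ x, u0 w + T * legendre H (T⁻¹ • (z - w)) ≤ u0 x + T * legendre H (T⁻¹ • (z - x))) :
    Splus T (legendre H) u0 z = u0 w + T * legendre H (T⁻¹ • (z - w)) :=
  le_antisymm (Splus_le_psi hHc hm hT hK z w) (le_ciInf hw)

lemma exists_hl_min (hH : ContDiff ℝ 2 H) (hHconv : PosDefHessian H)
    (hs : Superlinear H) (hm : IsLegMax H m) {T : ℝ} (hT : 0 < T)
    {K : NNReal} {u0 : Euc n → ℝ} (hK : LipschitzWith K u0) (z : Euc n) :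
    ∃ w, ∀ x, u0 w + T * legendre H (T⁻¹ • (z - w)) ≤ u0 x + T * legendre H (T⁻¹ • (z - x)) := by
  obtain ⟨C, hC⟩ := psi_coercive hH.continuous hm hT hK
  have hLc : Continuous (legendre H) :=
    (legendre_contDiff hH hHconv hs hm).continuous
  have hcont : Continuous fun x : Euc n => u0 x + T * legendre H (T⁻¹ • (z - x)) := by
    apply hK.continuous.add
    exact continuous_const.mul (hLc.comp ((continuous_const.sub continuous_id).const_smul T⁻¹))
  apply exists_min_coercive hcont (a := u0 z - C) (z := z)
  intro x
  have := hC z x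
  have h6 : ‖x - z‖ = ‖z - x‖ := norm_sub_rev x z
  rw [h6]
  linarith

lemma minimizer_stability (hH : ContDiff ℝ 2 H) (hHconv : PosDefHessian H)
    (hs : Superlinear H) (hm : IsLegMax H m) {T : ℝ} (hT : 0 < T)
    {K KT : NNReal} {u0 uT : Euc n → ℝ} (hK : LipschitzWith K u0)
    (hKT : LipschitzWith KT uT) (huT : Splus T (legendre H) u0 = uT)
    (w : Euc n → Euc n)
    (hw : ∀ z' x, u0 (w z') + T * legendre H (T⁻¹ • (z' - w z'))
      ≤ u0 x + T * legendre H (T⁻¹ • (z' - x)))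
    {z x0 : Euc n}
    (huniq : ∀ x, x ≠ x0 → u0 x0 + T * legendre H (T⁻¹ • (z - x0))
      < u0 x + T * legendre H (T⁻¹ • (z - x)))
    {ε : ℝ} (hε : 0 < ε) :
    ∃ δ > 0, ∀ z', dist z' z < δ → dist (w z') x0 < ε := by
  have hTne : T ≠ 0 := ne_of_gt hT
  set Ψ : Euc n → Euc n → ℝ :=
    fun z' x => u0 x + T * legendre H (T⁻¹ • (z' - x)) with hΨ
  have hmin : ∀ x, Ψ z x0 ≤ Ψ z x := by
    intro x
    by_cases hx : x = x0
    · rw [hx]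
    · exact le_of_lt (huniq x hx)
  set c0 : ℝ := Ψ z x0 with hc0
  have huTz : uT z = c0 := by rw [← huT]; exact Splus_eq_min hH.continuous hm hT hK hmin
  have huTz' : ∀ z', uT z' = Ψ z' (w z') := by
    intro z'
    rw [← huT]
    exact Splus_eq_min hH.continuous hm hT hK (hw z')
  obtain ⟨C, hC⟩ := psi_coercive hH.continuous hm hT hK
  -- R bound for minimizers with dist z' z ≤ 1
  set R1 : ℝ := uT z + KT - u0 z + K + C with hR1
  set R : ℝ := |R1| + 1 + ‖z - x0‖ with hR
  have hRpos : 0 < R := by positivity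
  have hRb : ∀ z', dist z' z ≤ 1 → ‖w z' - x0‖ ≤ R := by
    intro z' hz'
    have h1 : uT z' = Ψ z' (w z') := huTz' z'
    have h2 : u0 z' + ‖z' - w z'‖ - C ≤ Ψ z' (w z') := hC z' (w z')
    have h3 : |uT z' - uT z| ≤ (KT : ℝ) * dist z' z := by
      have := hKT.dist_le_mul z' z
      rwa [Real.dist_eq] at this
    have h4 : |u0 z - u0 z'| ≤ (K : ℝ) * dist z z' := by
      have := hK.dist_le_mul z z'
      rwa [Real.dist_eq] at this
    have h5 : (KT : ℝ) * dist z' z ≤ KT := by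
      have := mul_le_mul_of_nonneg_left hz' KT.coe_nonneg
      simpa using this
    have h6 : (K : ℝ) * dist z z' ≤ K := by
      rw [dist_comm]
      have := mul_le_mul_of_nonneg_left hz' K.coe_nonneg
      simpa using this
    have h7 : ‖z' - w z'‖ ≤ R1 := by
      have ha := (abs_le.1 h3).2
      have hb := (abs_le.1 h4).2
      rw [hR1]
      linarith
    calc ‖w z' - x0‖ ≤ ‖w z' - z'‖ + ‖z' - z‖ + ‖z - x0‖ := by
          have := norm_add₃_le (a := w z' - z') (b := z' - z) (c := z - x0)
          simpa using this
      _ ≤ R1 + 1 + ‖z - x0‖ := by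
          have e1 : ‖w z' - z'‖ = ‖z' - w z'‖ := norm_sub_rev _ _
          have e2 : ‖z' - z‖ ≤ 1 := by rwa [← dist_eq_norm]
          linarith
      _ ≤ R := by
          have : R1 ≤ |R1| := le_abs_self _
          rw [hR]
          linarith
  -- bound on m over relevant arguments
  set ρ : ℝ := T⁻¹ * (1 + ‖z - x0‖ + R) with hρ
  obtain ⟨B, hB0, hB⟩ := m_bound hH.continuous hs hm ρ
  have hargbd : ∀ z' x, dist z' z ≤ 1 → ‖x - x0‖ ≤ R → ‖T⁻¹ • (z' - x)‖ ≤ ρ := by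
    intro z' x hz' hx
    rw [norm_smul, Real.norm_eq_abs, abs_of_pos (inv_pos.2 hT), hρ]
    have h1 : ‖z' - x‖ ≤ ‖z' - z‖ + ‖z - x0‖ + ‖x0 - x‖ := by
      have := norm_add₃_le (a := z' - z) (b := z - x0) (c := x0 - x)
      simpa using this
    have h2 : ‖z' - z‖ ≤ 1 := by rwa [← dist_eq_norm]
    have h3 : ‖x0 - x‖ = ‖x - x0‖ := norm_sub_rev _ _
    have h4 : ‖z' - x‖ ≤ 1 + ‖z - x0‖ + R := by linarith
    have := mul_le_mul_of_nonneg_left h4 (le_of_lt (inv_pos.2 hT))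
    linarith
  -- uniform comparison of Ψ z' and Ψ z on the relevant set
  have hcomp : ∀ z' x, dist z' z ≤ 1 → ‖x - x0‖ ≤ R →
      Ψ z x - B * dist z' z ≤ Ψ z' x := by
    intro z' x hz' hx
    set a := T⁻¹ • (z - x)
    set a' := T⁻¹ • (z' - x)
    have hL := legendre_sub_le hm a a'
    have hma : ‖m a‖ ≤ B := hB a (hargbd z x (by simp) hx)
    have hdiff : a - a' = T⁻¹ • (z - z') := by
      rw [← smul_sub]
      congr 1
      abel
    have hnd : ‖a - a'‖ = T⁻¹ * dist z z' := by
      rw [hdiff, norm_smul, Real.norm_eq_abs, abs_of_pos (inv_pos.2 hT), dist_eq_norm]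
    have h1 : legendre H a - legendre H a' ≤ T⁻¹ * dist z z' * B := by
      calc legendre H a - legendre H a' ≤ ‖a - a'‖ * ‖m a‖ := hL
        _ ≤ T⁻¹ * dist z z' * B := by
            rw [hnd]
            exact mul_le_mul_of_nonneg_left hma (by positivity)
    have h2 : T * (legendre H a - legendre H a') ≤ dist z z' * B := by
      have := mul_le_mul_of_nonneg_left h1 (le_of_lt hT)
      calc T * (legendre H a - legendre H a') ≤ T * (T⁻¹ * dist z z' * B) := this
        _ = dist z z' * B := by field_simp
    have hdc : dist z z' = dist z' z := dist_comm _ _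
    rw [hΨ]
    simp only
    rw [hdc] at h2
    nlinarith [h2]
  -- continuity of Ψ z
  have hLc : Continuous (legendre H) := (legendre_contDiff hH hHconv hs hm).continuous
  have hΨc : Continuous (Ψ z) := by
    apply hK.continuous.add
    exact continuous_const.mul (hLc.comp ((continuous_const.sub continuous_id).const_smul T⁻¹))
  set S : Set (Euc n) := closedBall x0 R ∩ {x | ε ≤ ‖x - x0‖} with hSdef
  have hScomp : IsCompact S := (isCompact_closedBall _ _).inter_right
    (isClosed_le continuous_const ((continuous_id.sub continuous_const).norm))
  rcases S.eq_empty_or_nonempty with hSe | hSne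
  · refine ⟨1, one_pos, fun z' hz' => ?_⟩
    have h1 : ‖w z' - x0‖ ≤ R := hRb z' (le_of_lt hz')
    by_contra hcon
    push_neg at hcon
    have : w z' ∈ S := by
      refine ⟨by simpa [mem_closedBall, dist_eq_norm] using h1, ?_⟩
      simp only [mem_setOf_eq]
      rw [dist_eq_norm] at hcon
      exact hcon
    rw [hSe] at this
    exact notMem_empty _ this
  · obtain ⟨xb, hxbS, hxbmin⟩ := hScomp.exists_isMinOn hSne hΨc.continuousOn
    have hxbne : xb ≠ x0 := by
      intro h
      have := hxbS.2
      rw [h] at this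
      simp only [mem_setOf_eq, sub_self, norm_zero] at this
      linarith
    have hgap0 : c0 < Ψ z xb := huniq xb hxbne
    set gap : ℝ := Ψ z xb - c0 with hgapdef
    have hgap : 0 < gap := by rw [hgapdef]; linarith
    refine ⟨min 1 (gap / (B + KT + 1)), lt_min one_pos (by positivity), fun z' hz' => ?_⟩
    have hd1 : dist z' z < 1 := lt_of_lt_of_le hz' (min_le_left _ _)
    have hd2 : dist z' z < gap / (B + KT + 1) := lt_of_lt_of_le hz' (min_le_right _ _)
    have h1 : ‖w z' - x0‖ ≤ R := hRb z' (le_of_lt hd1)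
    by_contra hcon
    push_neg at hcon
    have hwS : w z' ∈ S := by
      refine ⟨by simpa [mem_closedBall, dist_eq_norm] using h1, ?_⟩
      simp only [mem_setOf_eq]
      rw [dist_eq_norm] at hcon
      exact hcon
    have h2 : Ψ z xb ≤ Ψ z (w z') := hxbmin hwS
    have h3 : Ψ z (w z') - B * dist z' z ≤ Ψ z' (w z') :=
      hcomp z' (w z') (le_of_lt hd1) h1
    have h4 : uT z' = Ψ z' (w z') := huTz' z'
    have h5 : |uT z' - uT z| ≤ (KT : ℝ) * dist z' z := by
      have := hKT.dist_le_mul z' z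
      rwa [Real.dist_eq] at this
    have h6 := (abs_le.1 h5).2
    have h7 : dist z' z * (B + KT + 1) ≤ gap := by
      rw [← le_div_iff₀ (by positivity)]
      exact le_of_lt hd2
    have h8 : (0:ℝ) ≤ dist z' z := dist_nonneg
    have hKT0 : (0:ℝ) ≤ KT := KT.coe_nonneg
    nlinarith [h2, h3, h4, h6, h7, huTz]
end Aux


set_option maxHeartbeats 4000000 in
/-- For `u0 ∈ I_T(u_T)`, a point `x0` belongs to `X_T(u_T)` iff there exist
`p0 ∈ D⁻u0(x0)` and `c0 ∈ ℝ` such that `u0(x0) = -T·L(∇H(p0)) + c0` and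
`u0(x) > -T·L(∇H(p0) + (x0-x)/T) + c0` for all `x ≠ x0`. -/
theorem XT_subdifferential_characterization
    {n : ℕ} (hn : 0 < n) (T : ℝ) (hT : 0 < T)
    (H : Euc n → ℝ) (hH : ContDiff ℝ 2 H)
    (hHconv : PosDefHessian H) (hHsuper : Superlinear H)
    (uT : Euc n → ℝ) (huT : IsLip uT)
    (hreach : ∃ u0 : Euc n → ℝ, IsLip u0 ∧ Splus T (legendre H) u0 = uT)
    (u0 : Euc n → ℝ) (hu0 : IsLip u0) (hu0mem : Splus T (legendre H) u0 = uT)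
    (x0 : Euc n) :
    x0 ∈ XT T H uT ↔
      ∃ p0 ∈ subdiff u0 x0, ∃ c0 : ℝ,
        u0 x0 = -(T * legendre H (gradient H p0)) + c0 ∧
        ∀ x : Euc n, x ≠ x0 →
          -(T * legendre H (gradient H p0 + T⁻¹ • (x0 - x))) + c0 < u0 x := by
  classical
  obtain ⟨K, hK⟩ := hu0
  obtain ⟨KT, hKT⟩ := huT
  have hHc : Continuous H := hH.continuous
  have hTne : T ≠ 0 := ne_of_gt hT
  have hmex : ∀ q : Euc n, ∃ pm, ∀ p, ⟪q, p⟫ - H p ≤ ⟪q, pm⟫ - H pm :=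
    exists_legendre_max hHc hHsuper
  set m : Euc n → Euc n := fun q => Classical.choose (hmex q) with hmdef
  have hm : IsLegMax H m := fun q => Classical.choose_spec (hmex q)
  have hwex : ∀ z : Euc n, ∃ w, ∀ x,
      u0 w + T * legendre H (T⁻¹ • (z - w)) ≤ u0 x + T * legendre H (T⁻¹ • (z - x)) :=
    exists_hl_min hH hHconv hHsuper hm hT hK
  set w : Euc n → Euc n := fun z => Classical.choose (hwex z) with hwdef
  have hw : ∀ z x, u0 (w z) + T * legendre H (T⁻¹ • (z - w z))
      ≤ u0 x + T * legendre H (T⁻¹ • (z - x)) := fun z => Classical.choose_spec (hwex z)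
  constructor
  · rintro ⟨z, hdiff, hx0⟩
    set p0 : Euc n := gradient uT z with hp0def
    -- every minimizer of the Hopf-Lax formula at z equals z - T∇H(p0)
    have hchar : ∀ v, (∀ x, u0 v + T * legendre H (T⁻¹ • (z - v))
        ≤ u0 x + T * legendre H (T⁻¹ • (z - x))) → v = z - T • gradient H p0 := by
      intro v hv
      have hψ := hasGradientAt_shift hH hHconv hHsuper hm hT v z
      have hge : ∀ z', uT z' ≤ u0 v + T * legendre H (T⁻¹ • (z' - v)) := by
        intro z'
        rw [← hu0mem]
        exact Splus_le_psi hHc hm hT hK z' v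
      have heqz : uT z = u0 v + T * legendre H (T⁻¹ • (z - v)) := by
        rw [← hu0mem]
        exact Splus_eq_min hHc hm hT hK hv
      have hloc : IsLocalMin
          (fun z' => (u0 v + T * legendre H (T⁻¹ • (z' - v))) - uT z') z := by
        apply Filter.Eventually.of_forall
        intro z'
        have h1 := hge z'
        simp only
        rw [← heqz]
        simp only [sub_self]
        linarith
      have hd : HasFDerivAt
          (fun z' => (u0 v + T * legendre H (T⁻¹ • (z' - v))) - uT z')
          ((InnerProductSpace.toDual ℝ (Euc n)) (m (T⁻¹ • (z - v))) - fderiv ℝ uT z) z :=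
        (hψ.hasFDerivAt.const_add (u0 v)).sub hdiff.hasFDerivAt
      have h0 := hloc.hasFDerivAt_eq_zero hd
      have heqd : (InnerProductSpace.toDual ℝ (Euc n)) (m (T⁻¹ • (z - v)))
          = fderiv ℝ uT z := sub_eq_zero.1 h0
      have hgr : HasGradientAt uT (m (T⁻¹ • (z - v))) z := by
        rw [hasGradientAt_iff_hasFDerivAt, heqd]
        exact hdiff.hasFDerivAt
      have hguT : p0 = m (T⁻¹ • (z - v)) := by rw [hp0def, hgr.gradient]
      have hHp0 : gradient H p0 = T⁻¹ • (z - v) := by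
        rw [hguT, gradH_m hH hm]
      rw [hHp0, smul_smul, mul_inv_cancel₀ hTne, one_smul, sub_sub_cancel]
    have hx0w : w z = x0 := by rw [hchar (w z) (hw z), hx0]
    have hminx0 : ∀ x, u0 x0 + T * legendre H (T⁻¹ • (z - x0))
        ≤ u0 x + T * legendre H (T⁻¹ • (z - x)) := by
      intro x
      have := hw z x
      rwa [hx0w] at this
    have huniq : ∀ x, x ≠ x0 → u0 x0 + T * legendre H (T⁻¹ • (z - x0))
        < u0 x + T * legendre H (T⁻¹ • (z - x)) := by
      intro x hx
      rcases lt_or_eq_of_le (hminx0 x) with h | h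
      · exact h
      · exfalso
        have hxmin : ∀ y, u0 x + T * legendre H (T⁻¹ • (z - x))
            ≤ u0 y + T * legendre H (T⁻¹ • (z - y)) := by
          intro y
          rw [← h]
          exact hminx0 y
        have := hchar x hxmin
        rw [← hx0] at this
        exact hx this
    have hzx0 : z - x0 = T • gradient H p0 := by rw [hx0, sub_sub_cancel]
    have haux : T⁻¹ • (z - x0) = gradient H p0 := by
      rw [hzx0, smul_smul, inv_mul_cancel₀ hTne, one_smul]
    have hc0 : uT z = u0 x0 + T * legendre H (gradient H p0) := by
      rw [← hu0mem, Splus_eq_min hHc hm hT hK hminx0, haux]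
    refine ⟨p0, ?_, uT z, by linarith, ?_⟩
    · -- subdifferential membership
      refine ⟨fun x => uT z + -(T * legendre H (T⁻¹ • (z - x))), ?_, ?_, ?_, ?_⟩
      · have haff : ContDiff ℝ 1 (fun x : Euc n => T⁻¹ • (z - x)) :=
          (contDiff_const.sub contDiff_id).const_smul T⁻¹
        have hLcd := legendre_contDiff hH hHconv hHsuper hm
        exact contDiff_const.add (contDiff_const.mul (hLcd.comp haff)).neg
      · have hgs := hasGradientAt_shift' hH hHconv hHsuper hm hT z x0
        have hfs := hgs.hasFDerivAt.const_add (uT z)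
        have : HasGradientAt (fun x => uT z + -(T * legendre H (T⁻¹ • (z - x))))
            (m (T⁻¹ • (z - x0))) x0 := hasGradientAt_iff_hasFDerivAt.2 hfs
        rw [this.gradient, haux, m_gradH hH hHconv hm]
      · intro x
        have h1 : uT z ≤ u0 x + T * legendre H (T⁻¹ • (z - x)) := by
          rw [← hu0mem]
          exact Splus_le_psi hHc hm hT hK z x
        linarith
      · show u0 x0 = uT z + -(T * legendre H (T⁻¹ • (z - x0)))
        rw [haux]
        linarith
    · intro x hx
      have e : gradient H p0 + T⁻¹ • (x0 - x) = T⁻¹ • (z - x) := by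
        rw [← haux, ← smul_add]
        congr 1
        abel
      rw [e]
      have h1 := huniq x hx
      rw [haux] at h1
      linarith
  · rintro ⟨p0, hp0, c0, heq, hstrict⟩
    have hLc : Continuous (legendre H) := (legendre_contDiff hH hHconv hHsuper hm).continuous
    set z : Euc n := x0 + T • gradient H p0 with hzdef
    have haux : T⁻¹ • (z - x0) = gradient H p0 := by
      rw [hzdef, add_sub_cancel_left, smul_smul, inv_mul_cancel₀ hTne, one_smul]
    have hPsix0 : u0 x0 + T * legendre H (T⁻¹ • (z - x0)) = c0 := by
      rw [haux]; linarith
    have hPsigt : ∀ x, x ≠ x0 → c0 < u0 x + T * legendre H (T⁻¹ • (z - x)) := by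
      intro x hx
      have e : gradient H p0 + T⁻¹ • (x0 - x) = T⁻¹ • (z - x) := by
        rw [← haux, ← smul_add]
        congr 1
        abel
      have h1 := hstrict x hx
      rw [e] at h1
      linarith
    have huniq : ∀ x, x ≠ x0 → u0 x0 + T * legendre H (T⁻¹ • (z - x0))
        < u0 x + T * legendre H (T⁻¹ • (z - x)) := by
      intro x hx
      rw [hPsix0]
      exact hPsigt x hx
    have hminx0 : ∀ x, u0 x0 + T * legendre H (T⁻¹ • (z - x0))
        ≤ u0 x + T * legendre H (T⁻¹ • (z - x)) := by
      intro x
      by_cases hx : x = x0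
      · rw [hx]
      · exact le_of_lt (huniq x hx)
    have huTz : uT z = c0 := by
      rw [← hu0mem, Splus_eq_min hHc hm hT hK hminx0, hPsix0]
    have hmp0 : m (gradient H p0) = p0 := m_gradH hH hHconv hm p0
    have hmc : Continuous m := m_cont hH hHconv hHsuper hm
    have hgrad : HasGradientAt uT p0 z := by
      rw [hasGradientAt_iff_hasFDerivAt, hasFDerivAt_iff_isLittleO_nhds_zero,
        Asymptotics.isLittleO_iff]
      intro c hc
      have hlam := hasGradientAt_shift hH hHconv hHsuper hm hT x0 z
      rw [haux, hmp0] at hlam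
      have hlamlo := hlam.hasFDerivAt
      rw [hasFDerivAt_iff_isLittleO_nhds_zero, Asymptotics.isLittleO_iff] at hlamlo
      have hupper := hlamlo hc
      obtain ⟨δ1, hδ1, hδ1p⟩ := Metric.continuousAt_iff.1
        (hmc.continuousAt (x := gradient H p0)) c hc
      obtain ⟨δ3, hδ3, hδ3p⟩ := minimizer_stability hH hHconv hHsuper hm hT hK hKT
        hu0mem w hw huniq (ε := T * δ1 / 2) (by positivity)
      set δm : ℝ := min δ3 (T * δ1 / 2) with hδm
      have hδmpos : 0 < δm := lt_min hδ3 (by positivity)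
      have hball : ∀ᶠ h : Euc n in nhds 0, ‖h‖ < δm := by
        rw [Metric.eventually_nhds_iff]
        exact ⟨δm, hδmpos, fun h hh => by rwa [dist_zero_right] at hh⟩
      filter_upwards [hupper, hball] with h hup hsm
      beta_reduce at hup
      set y : Euc n := w (z + h) with hydef
      have hyx0 : dist y x0 < T * δ1 / 2 := by
        apply hδ3p
        rw [dist_eq_norm, add_sub_cancel_left]
        exact lt_of_lt_of_le hsm (min_le_left _ _)
      have htd : (InnerProductSpace.toDual ℝ (Euc n)) p0 h = ⟪p0, h⟫ :=
        InnerProductSpace.toDual_apply_apply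
      have e0 : uT z = u0 x0 + T * legendre H (T⁻¹ • (z - x0)) := by
        rw [huTz, ← hPsix0]
      have hup2 : uT (z + h) - uT z - (InnerProductSpace.toDual ℝ (Euc n)) p0 h
          ≤ c * ‖h‖ := by
        have hup1 : uT (z + h) ≤ u0 x0 + T * legendre H (T⁻¹ • (z + h - x0)) := by
          rw [← hu0mem]
          exact Splus_le_psi hHc hm hT hK (z + h) x0
        rw [Real.norm_eq_abs] at hup
        have hb := (abs_le.1 hup).2
        linarith
      have hlow : -(c * ‖h‖) ≤ uT (z + h) - uT z
          - (InnerProductSpace.toDual ℝ (Euc n)) p0 h := by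
        by_cases hh0 : h = 0
        · simp [hh0]
        · have hy1 : uT (z + h) = u0 y + T * legendre H (T⁻¹ • (z + h - y)) := by
            rw [← hu0mem]
            exact Splus_eq_min hHc hm hT hK (hw (z + h))
          have hy2 : uT z ≤ u0 y + T * legendre H (T⁻¹ • (z - y)) := by
            rw [← hu0mem]
            exact Splus_le_psi hHc hm hT hK z y
          set g : ℝ → ℝ := fun t => T * legendre H (T⁻¹ • (z + t • h - y)) with hgdef
          set D : ℝ → ℝ := fun t => (⟪m (T⁻¹ • (z + t • h - y)), h⟫ : ℝ) with hDdef
          have hline : ∀ t : ℝ, HasDerivAt (fun s : ℝ => z + s • h) h t := by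
            intro t
            simpa using ((hasDerivAt_id t).smul_const h).const_add z
          have hgd : ∀ t, HasDerivAt g (D t) t := by
            intro t
            have hs := (hasGradientAt_shift hH hHconv hHsuper hm hT y (z + t • h)).hasFDerivAt
            have := hs.comp_hasDerivAt t (hline t)
            simp only [InnerProductSpace.toDual_apply_apply] at this
            exact this
          have hgc : ContinuousOn g (Set.Icc 0 1) := by
            apply Continuous.continuousOn
            apply continuous_const.mul
            apply hLc.comp
            exact ((continuous_const.add (continuous_id.smul continuous_const)).sub
              continuous_const).const_smul T⁻¹
          obtain ⟨θ, hθ, hslope⟩ := exists_hasDerivAt_eq_slope g D zero_lt_one hgc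
            (fun t _ => hgd t)
          have hg10 : g 1 - g 0 = D θ := by
            rw [hslope]
            ring
          have hξ : dist (T⁻¹ • (z + θ • h - y)) (gradient H p0) < δ1 := by
            rw [dist_eq_norm, ← haux, ← smul_sub]
            have e1 : z + θ • h - y - (z - x0) = θ • h + (x0 - y) := by abel
            rw [e1, norm_smul, Real.norm_eq_abs, abs_of_pos (inv_pos.2 hT)]
            have h2 : ‖θ • h + (x0 - y)‖ ≤ ‖θ • h‖ + ‖x0 - y‖ := norm_add_le _ _
            have h3 : ‖θ • h‖ ≤ ‖h‖ := by
              rw [norm_smul, Real.norm_eq_abs, abs_of_pos hθ.1]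
              nlinarith [norm_nonneg h, hθ.2]
            have h4 : ‖x0 - y‖ < T * δ1 / 2 := by
              rw [← dist_eq_norm, dist_comm]
              exact hyx0
            have h5 : ‖h‖ < T * δ1 / 2 := lt_of_lt_of_le hsm (min_le_right _ _)
            calc T⁻¹ * ‖θ • h + (x0 - y)‖ ≤ T⁻¹ * (‖h‖ + ‖x0 - y‖) := by
                  apply mul_le_mul_of_nonneg_left _ (le_of_lt (inv_pos.2 hT))
                  linarith
              _ < T⁻¹ * (T * δ1) := by
                  apply mul_lt_mul_of_pos_left _ (inv_pos.2 hT)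
                  linarith
              _ = δ1 := by field_simp
          have hmd : ‖m (T⁻¹ • (z + θ • h - y)) - p0‖ < c := by
            have := hδ1p hξ
            rw [hmp0, dist_eq_norm] at this
            exact this
          have hDb : (⟪p0, h⟫ : ℝ) - c * ‖h‖ ≤ D θ := by
            have hsplit : D θ = ⟪p0, h⟫ + ⟪m (T⁻¹ • (z + θ • h - y)) - p0, h⟫ := by
              rw [hDdef]
              simp only
              rw [inner_sub_left]
              ring
            have hin : |(⟪m (T⁻¹ • (z + θ • h - y)) - p0, h⟫ : ℝ)|
                ≤ ‖m (T⁻¹ • (z + θ • h - y)) - p0‖ * ‖h‖ := abs_real_inner_le_norm _ _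
            have hin2 : ‖m (T⁻¹ • (z + θ • h - y)) - p0‖ * ‖h‖ ≤ c * ‖h‖ :=
              mul_le_mul_of_nonneg_right (le_of_lt hmd) (norm_nonneg _)
            have := (abs_le.1 hin).1
            rw [hsplit]
            linarith
          have hg1 : g 1 = T * legendre H (T⁻¹ • (z + h - y)) := by
            rw [hgdef]
            simp only [one_smul]
          have hg0 : g 0 = T * legendre H (T⁻¹ • (z - y)) := by
            rw [hgdef]
            simp only [zero_smul, add_zero]
          rw [htd]
          linarith
      rw [Real.norm_eq_abs, abs_le]
      exact ⟨hlow, hup2⟩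
    refine ⟨z, hgrad.differentiableAt, ?_⟩
    rw [hgrad.gradient, hzdef, add_sub_cancel_right]
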